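/- Let D(r,s) be the covariance double contour integral (see context). For all integers r ≥ s ≥ 1, the complex number D(r,s) is a strictly positive real number, i.e., its imaginary part is zero and its real part is positive. -/

import Mathlib

open MeasureTheory Filter Finset

section Aux

open Metric

/-- A point on a circle of positive radius about the origin is nonzero. -/
lemma wne {ρ : ℝ} (hρ : 0 < ρ) {w : ℂ} (hw : w ∈ sphere (0 : ℂ) ρ) : w ≠ 0 := by
  have h1 : ‖w‖ = ρ := by simpa using hw
  intro h; rw [h, norm_zero] at h1; linarith

/-- Cauchy–Goursat for a disc centred at the origin. -/
lemma circZero {ρ : ℝ} (hρ : 0 ≤ ρ) {f : ℂ → ℂ}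
    (hf : ∀ z ∈ closedBall (0 : ℂ) ρ, DifferentiableAt ℂ f z) :
    (∮ w in C(0, ρ), f w) = 0 :=
  Complex.circleIntegral_eq_zero_of_differentiable_on_off_countable hρ Set.countable_empty
    (fun z hz => (hf z hz).continuousAt.continuousWithinAt)
    (fun z hz => hf z (ball_subset_closedBall hz.1))

/-- Cauchy integral formula for `exp` with a pole of arbitrary order at the origin. -/
lemma expInt_succ {ρ : ℝ} (hρ : 0 < ρ) (n : ℕ) :
    (∮ w in C(0, ρ), Complex.exp w / w ^ (n + 1)) =
      2 * Real.pi * Complex.I / n.factorial := by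
  lift ρ to NNReal using hρ.le with ρ' hρ'
  have hρpos : (0 : NNReal) < ρ' := by exact_mod_cast hρ
  have h1 : HasFPowerSeriesAt Complex.exp (cauchyPowerSeries Complex.exp 0 ρ') 0 :=
    (Complex.differentiable_exp.hasFPowerSeriesOnBall 0 hρpos).hasFPowerSeriesAt
  have h2 : HasFPowerSeriesAt Complex.exp (NormedSpace.expSeries ℂ ℂ) 0 := by
    rw [Complex.exp_eq_exp_ℂ]; exact NormedSpace.exp_hasFPowerSeriesAt_zero
  have h3 := h1.eq_formalMultilinearSeries h2
  have h5 : (cauchyPowerSeries Complex.exp 0 ρ' n fun _ => (1 : ℂ)) =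
      NormedSpace.expSeries ℂ ℂ n fun _ => (1 : ℂ) := by rw [h3]
  rw [cauchyPowerSeries_apply, NormedSpace.expSeries_apply_eq] at h5
  have h6 : (∮ z in C(0, (ρ' : ℝ)), ((1 : ℂ) / (z - 0)) ^ n • (z - 0)⁻¹ • Complex.exp z) =
      ∮ z in C(0, (ρ' : ℝ)), Complex.exp z / z ^ (n + 1) := by
    refine circleIntegral.integral_congr hρ.le fun z hz => ?_
    simp only [sub_zero, smul_eq_mul, one_div, inv_pow, pow_succ, mul_inv, div_eq_mul_inv]
    ring
  rw [h6] at h5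
  have h7 := congrArg (fun t : ℂ => (2 * Real.pi * Complex.I) * t) h5
  simp only [smul_eq_mul, ← mul_assoc, mul_inv_cancel₀ Complex.two_pi_I_ne_zero, one_mul,
    one_pow, mul_one] at h7
  rw [h7, div_eq_mul_inv]

/-- `∮ exp w / w^k` for every natural `k`. -/
lemma expInt {ρ : ℝ} (hρ : 0 < ρ) (k : ℕ) :
    (∮ w in C(0, ρ), Complex.exp w / w ^ k) =
      if k = 0 then 0 else 2 * Real.pi * Complex.I / (k - 1).factorial := by
  cases k with
  | zero =>
    simp only [pow_zero, div_one, if_pos rfl]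
    exact circZero hρ.le fun z _ => Complex.differentiable_exp z
  | succ n => simpa using expInt_succ hρ n

lemma ciExpPow {ρ : ℝ} (hρ : 0 < ρ) (k : ℕ) :
    CircleIntegrable (fun w : ℂ => Complex.exp w / w ^ k) 0 ρ := by
  refine ContinuousOn.circleIntegrable hρ.le ?_
  exact ContinuousOn.div (by fun_prop) ((continuous_pow _).continuousOn)
    fun w hw => pow_ne_zero _ (wne hρ hw)

/-- The basic residue computation `∮ exp w (1 - w/s) / w^(m+1) = 2πi (s-m)/(s·m!)`. -/
lemma expInt' {ρ : ℝ} (hρ : 0 < ρ) {s : ℕ} (hs : 1 ≤ s) (m : ℕ) :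
    (∮ w in C(0, ρ), Complex.exp w * (1 - w / (s : ℂ)) / w ^ (m + 1)) =
      2 * Real.pi * Complex.I * ((s : ℂ) - m) / ((s : ℂ) * m.factorial) := by
  have hs0 : (s : ℂ) ≠ 0 := Nat.cast_ne_zero.mpr (by omega)
  have hcongr : Set.EqOn (fun w : ℂ => Complex.exp w * (1 - w / (s : ℂ)) / w ^ (m + 1))
      (fun w : ℂ => Complex.exp w / w ^ (m + 1) - (s : ℂ)⁻¹ • (Complex.exp w / w ^ m))
      (sphere (0 : ℂ) ρ) := by
    intro w hw
    have hw0 : w ≠ 0 := wne hρ hw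
    simp only [smul_eq_mul]
    field_simp
    ring
  rw [circleIntegral.integral_congr hρ.le hcongr,
    circleIntegral.integral_sub (f := fun w : ℂ => Complex.exp w / w ^ (m + 1))
      (g := fun w : ℂ => (s : ℂ)⁻¹ • (Complex.exp w / w ^ m)) (ciExpPow hρ (m + 1))
      (ContinuousOn.circleIntegrable hρ.le (ContinuousOn.fun_smul continuousOn_const
        (ContinuousOn.div₀ Complex.continuous_exp.continuousOn ((continuous_pow _).continuousOn)
          fun w hw => pow_ne_zero _ (wne hρ hw)))),
    circleIntegral.integral_smul, expInt hρ (m + 1), expInt hρ m]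
  simp only [Nat.succ_ne_zero, if_false, Nat.add_sub_cancel, smul_eq_mul]
  rcases Nat.eq_zero_or_pos m with rfl | hm
  · rw [mul_div_assoc, mul_div_assoc]
    simp [Nat.factorial, mul_div_assoc, div_self hs0]
  · rw [if_neg (by omega)]
    obtain ⟨k, rfl⟩ : ∃ k, m = k + 1 := ⟨m - 1, by omega⟩
    have hfac : ((k + 1).factorial : ℂ) = (k + 1) * (k.factorial : ℂ) := by
      push_cast [Nat.factorial_succ]; ring
    have hfk : ((k.factorial : ℂ)) ≠ 0 := Nat.cast_ne_zero.mpr k.factorial_ne_zero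
    simp only [Nat.add_sub_cancel, hfac]
    have hk1 : ((k : ℂ) + 1) ≠ 0 := by
      have h9 : ((k + 1 : ℕ) : ℂ) ≠ 0 := Nat.cast_ne_zero.mpr (Nat.succ_ne_zero k)
      push_cast at h9; exact h9
    field_simp
    push_cast
    ring

/-- Partial fraction decomposition of `1/((z-w)·wˢ)`. -/
lemma pf_identity {z w : ℂ} (hz : z ≠ 0) (hw : w ≠ 0) (hzw : z - w ≠ 0)
    (s : ℕ) (E : ℂ) :
    E / ((z - w) * w ^ s) =
      (∑ j ∈ range s, z ^ j / z ^ s * (E / w ^ (j + 1))) + 1 / z ^ s * (E / (z - w)) := by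
  have key : (∑ j ∈ range s, z ^ j * w ^ (s - 1 - j)) * (z - w) = z ^ s - w ^ s :=
    geom_sum₂_mul z w s
  have hzs : z ^ s ≠ 0 := pow_ne_zero _ hz
  have hws : w ^ s ≠ 0 := pow_ne_zero _ hw
  have step : (∑ j ∈ range s, z ^ j / z ^ s * (E / w ^ (j + 1))) =
      (∑ j ∈ range s, z ^ j * w ^ (s - 1 - j)) * E / (z ^ s * w ^ s) := by
    rw [sum_mul, sum_div]
    refine sum_congr rfl fun j hj => ?_
    have hj' := mem_range.mp hj
    have hpow : w ^ (s - 1 - j) * w ^ (j + 1) = w ^ s := by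
      rw [← pow_add]; congr 1; omega
    rw [div_mul_div_comm, div_eq_div_iff (mul_ne_zero hzs (pow_ne_zero _ hw))
      (mul_ne_zero hzs hws)]
    linear_combination (-(z ^ j * E * z ^ s)) * hpow
  rw [step]
  set S := ∑ j ∈ range s, z ^ j * w ^ (s - 1 - j) with hS
  rw [one_div, inv_mul_eq_div, div_div, div_add_div _ _ (mul_ne_zero hzs hws)
    (mul_ne_zero hzw hzs), div_eq_div_iff (mul_ne_zero hzw hws)
    (mul_ne_zero (mul_ne_zero hzs hws) (mul_ne_zero hzw hzs))]
  linear_combination (-(E * z ^ s * (z - w) * w ^ s)) * key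

lemma ciSum {ι : Type*} {c : ℂ} {R : ℝ} (t : Finset ι) {f : ι → ℂ → ℂ}
    (h : ∀ i ∈ t, CircleIntegrable (f i) c R) :
    CircleIntegrable (fun z => ∑ i ∈ t, f i z) c R := by
  have h1 : IntervalIntegrable (∑ i ∈ t, fun θ : ℝ => f i (circleMap c R θ))
      MeasureTheory.volume 0 (2 * Real.pi) :=
    IntervalIntegrable.sum t fun i hi => h i hi
  have h2 : (∑ i ∈ t, fun θ : ℝ => f i (circleMap c R θ)) =
      fun θ : ℝ => ∑ i ∈ t, f i (circleMap c R θ) := by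
    funext θ; simp
  rw [h2] at h1
  exact h1

lemma circleIntegral_add {f g : ℂ → ℂ} {c : ℂ} {R : ℝ} (hf : CircleIntegrable f c R)
    (hg : CircleIntegrable g c R) :
    (∮ z in C(c, R), (f z + g z)) = (∮ z in C(c, R), f z) + ∮ z in C(c, R), g z := by
  simp only [circleIntegral, smul_add, intervalIntegral.integral_add hf.out hg.out]

lemma circleIntegral_sum {ι : Type*} (t : Finset ι) (f : ι → ℂ → ℂ) {c : ℂ} {R : ℝ}
    (h : ∀ i ∈ t, CircleIntegrable (f i) c R) :
    (∮ z in C(c, R), ∑ i ∈ t, f i z) = ∑ i ∈ t, ∮ z in C(c, R), f i z := by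
  simp only [circleIntegral, smul_sum]
  exact intervalIntegral.integral_finset_sum fun i hi => (h i hi).out

/-- The inner contour integral, evaluated by residues. -/
lemma inner_int {ρ : ℝ} (hρ : 0 < ρ) {s : ℕ} (hs : 1 ≤ s) {z : ℂ} (hz : ρ < ‖z‖) :
    (∮ w in C(0, ρ), Complex.exp w * (1 - w / (s : ℂ)) / ((z - w) * w ^ s)) =
      2 * Real.pi * Complex.I *
        ∑ j ∈ range s, ((s : ℂ) - j) / ((s : ℂ) * j.factorial) * (z ^ j / z ^ s) := by
  have hz0 : z ≠ 0 := by intro h; rw [h, norm_zero] at hz; linarith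
  have hzw : ∀ w ∈ closedBall (0 : ℂ) ρ, z - w ≠ 0 := by
    intro w hw
    have hwn : ‖w‖ ≤ ρ := by simpa using hw
    exact sub_ne_zero.mpr fun h => by rw [← h] at hwn; linarith
  have hcongr : Set.EqOn (fun w : ℂ => Complex.exp w * (1 - w / (s : ℂ)) / ((z - w) * w ^ s))
      (fun w : ℂ =>
        (∑ j ∈ range s, (z ^ j / z ^ s) • (Complex.exp w * (1 - w / (s : ℂ)) / w ^ (j + 1))) +
          (1 / z ^ s) • (Complex.exp w * (1 - w / (s : ℂ)) / (z - w))) (sphere 0 ρ) := by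
    intro w hw
    have hw0 : w ≠ 0 := wne hρ hw
    simp only [smul_eq_mul]
    exact pf_identity hz0 hw0 (hzw w (sphere_subset_closedBall hw)) s _
  have hci : ∀ j ∈ range s, CircleIntegrable
      (fun w : ℂ => (z ^ j / z ^ s) • (Complex.exp w * (1 - w / (s : ℂ)) / w ^ (j + 1))) 0 ρ := by
    intro j _
    refine ContinuousOn.circleIntegrable hρ.le ?_
    exact (ContinuousOn.div₀
      (by fun_prop : Continuous (fun w : ℂ => Complex.exp w * (1 - w / (s : ℂ)))).continuousOn
      ((continuous_pow _).continuousOn)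
      fun w hw => pow_ne_zero _ (wne hρ hw)).fun_const_smul _
  have hcil : CircleIntegrable
      (fun w : ℂ => (1 / z ^ s) • (Complex.exp w * (1 - w / (s : ℂ)) / (z - w))) 0 ρ := by
    refine ContinuousOn.circleIntegrable hρ.le ?_
    exact (ContinuousOn.div₀
      (by fun_prop : Continuous (fun w : ℂ => Complex.exp w * (1 - w / (s : ℂ)))).continuousOn
      (by fun_prop : Continuous (fun w : ℂ => z - w)).continuousOn
      fun w hw => hzw w (sphere_subset_closedBall hw)).fun_const_smul _
  rw [circleIntegral.integral_congr hρ.le hcongr,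
    circleIntegral_add (ciSum _ hci) hcil,
    circleIntegral_sum _ _ hci]
  have hlast : (∮ w in C(0, ρ),
      (1 / z ^ s) • (Complex.exp w * (1 - w / (s : ℂ)) / (z - w))) = 0 := by
    rw [circleIntegral.integral_smul]
    rw [circZero hρ.le fun w hw => ?_, smul_zero]
    exact DifferentiableAt.div (by fun_prop) (by fun_prop) (hzw w hw)
  rw [hlast, add_zero]
  have hterm : ∀ j ∈ range s,
      (∮ w in C(0, ρ), (z ^ j / z ^ s) • (Complex.exp w * (1 - w / (s : ℂ)) / w ^ (j + 1))) =
        (z ^ j / z ^ s) * (2 * Real.pi * Complex.I * ((s : ℂ) - j) / ((s : ℂ) * j.factorial)) := by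
    intro j _
    rw [circleIntegral.integral_smul, expInt' hρ hs j, smul_eq_mul]
  rw [sum_congr rfl hterm, mul_sum]
  exact sum_congr rfl fun j _ => by ring

lemma inner_alg {z w : ℂ} (hw : w ≠ 0) (hzw : z - w ≠ 0) {r s : ℕ} (hz : z ≠ 0)
    (P Ez Ew : ℂ) :
    w / (z - w) * (P / (z ^ r * w ^ s)) * (Ez * Ew) * (1 - z / (r : ℂ)) * (1 - w / (s : ℂ)) / w =
      (P * Ez * (1 - z / (r : ℂ)) / z ^ r) • (Ew * (1 - w / (s : ℂ)) / ((z - w) * w ^ s)) := by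
  set u := z - w with hu
  have hzr : z ^ r ≠ 0 := pow_ne_zero _ hz
  have hws : w ^ s ≠ 0 := pow_ne_zero _ hw
  simp only [smul_eq_mul]
  field_simp

lemma term_alg (P X Y D Q : ℂ) {z : ℂ} (hz : z ≠ 0) {r s j : ℕ} (hj : j < s) :
    P * X * Y / z ^ r * (Q * (D * (z ^ j / z ^ s))) / z =
      (Q * P * D) • (X * Y / z ^ (r + s - j + 1)) := by
  have hp1 : z ^ (r + s - j + 1) * z ^ j = z ^ r * z ^ s * z := by
    rw [← pow_add, ← pow_add, ← pow_succ]; congr 1; omega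
  have h1 : z ^ r ≠ 0 := pow_ne_zero _ hz
  have h2 : z ^ s ≠ 0 := pow_ne_zero _ hz
  have h3 : z ^ (r + s - j + 1) ≠ 0 := pow_ne_zero _ hz
  simp only [smul_eq_mul]
  field_simp
  linear_combination P * X * Y * D * Q * hp1

end Aux

/-- The covariance double contour integral `D(r,s)` of slowed `t`-TASEP:
`D(r,s) = (1/(4π²)) ∮_{|z|=R} ∮_{|w|=ρ} (w/(z−w)) (r!s!/(z^r w^s)) e^{z+w} (1−z/r)(1−w/s) (dz/z)(dw/w)`,
with both circles centered at the origin, traversed counterclockwise, and the inner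
integral in `w` performed first. -/
noncomputable def covD (r s : ℕ) (R ρ : ℝ) : ℂ :=
  (1 / (4 * (Real.pi : ℂ) ^ 2)) *
    ∮ z in C(0, R),
      (∮ w in C(0, ρ),
        w / (z - w) * ((r.factorial : ℂ) * (s.factorial : ℂ) / (z ^ r * w ^ s)) *
          Complex.exp (z + w) * (1 - z / (r : ℂ)) * (1 - w / (s : ℂ)) / w) / z

section Main

open Metric

/-- Explicit evaluation of `covD` as a finite positive real sum. -/
theorem covD_eq (r s : ℕ) (hs : 1 ≤ s) (hsr : s ≤ r)
    (ρ R : ℝ) (hρ : 0 < ρ) (hρR : ρ < R) :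
    covD r s R ρ = ((∑ j ∈ range s, (r.factorial * s.factorial : ℝ) * ((s : ℝ) - j) ^ 2 /
      ((r : ℝ) * s * j.factorial * (r + s - j).factorial) : ℝ) : ℂ) := by
  have hr : 1 ≤ r := le_trans hs hsr
  have hR : 0 < R := hρ.trans hρR
  have hpoint : ∀ z ∈ sphere (0 : ℂ) R,
      ((∮ w in C(0, ρ),
        w / (z - w) * ((r.factorial : ℂ) * (s.factorial : ℂ) / (z ^ r * w ^ s)) *
          Complex.exp (z + w) * (1 - z / (r : ℂ)) * (1 - w / (s : ℂ)) / w) / z) =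
      ∑ j ∈ range s,
        (2 * (Real.pi : ℂ) * Complex.I * ((r.factorial : ℂ) * (s.factorial : ℂ)) *
            (((s : ℂ) - j) / ((s : ℂ) * j.factorial))) •
          (Complex.exp z * (1 - z / (r : ℂ)) / z ^ (r + s - j + 1)) := by
    intro z hz
    have hzn : ‖z‖ = R := by simpa using hz
    have hz0 : z ≠ 0 := by intro h; rw [h, norm_zero] at hzn; linarith
    have hzρ : ρ < ‖z‖ := by rw [hzn]; exact hρR
    have hA : Set.EqOn (fun w : ℂ =>
        w / (z - w) * ((r.factorial : ℂ) * (s.factorial : ℂ) / (z ^ r * w ^ s)) *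
          Complex.exp (z + w) * (1 - z / (r : ℂ)) * (1 - w / (s : ℂ)) / w)
        (fun w : ℂ =>
          ((r.factorial : ℂ) * (s.factorial : ℂ) * Complex.exp z * (1 - z / (r : ℂ)) / z ^ r) •
            (Complex.exp w * (1 - w / (s : ℂ)) / ((z - w) * w ^ s))) (sphere 0 ρ) := by
      intro w hw
      have hw0 : w ≠ 0 := wne hρ hw
      have hwn : ‖w‖ = ρ := by simpa using hw
      have hzw : z - w ≠ 0 := sub_ne_zero.mpr fun h => by
        rw [h, hwn] at hzρ; exact lt_irrefl _ hzρ
      simp only [Complex.exp_add]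
      exact inner_alg hw0 hzw hz0 _ _ _
    rw [circleIntegral.integral_congr hρ.le hA, circleIntegral.integral_smul,
      inner_int hρ hs hzρ, smul_eq_mul]
    simp only [Finset.mul_sum, Finset.sum_div]
    exact sum_congr rfl fun j hj => term_alg _ _ _ _ _ hz0 (mem_range.mp hj)
  have hzR : ∀ z ∈ sphere (0 : ℂ) R, z ≠ 0 := by
    intro z hz h
    have hzn : ‖z‖ = R := by simpa using hz
    rw [h, norm_zero] at hzn; linarith
  have hci2 : ∀ j ∈ range s, CircleIntegrable (fun z : ℂ =>
      (2 * (Real.pi : ℂ) * Complex.I * ((r.factorial : ℂ) * (s.factorial : ℂ)) *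
          (((s : ℂ) - j) / ((s : ℂ) * j.factorial))) •
        (Complex.exp z * (1 - z / (r : ℂ)) / z ^ (r + s - j + 1))) 0 R := by
    intro j _
    refine ContinuousOn.circleIntegrable hR.le ?_
    exact (ContinuousOn.div₀
      (by fun_prop : Continuous (fun z : ℂ => Complex.exp z * (1 - z / (r : ℂ)))).continuousOn
      ((continuous_pow _).continuousOn)
      fun z hz => pow_ne_zero _ (hzR z hz)).fun_const_smul _
  have hterm : ∀ j ∈ range s, (∮ z in C(0, R),
      (2 * (Real.pi : ℂ) * Complex.I * ((r.factorial : ℂ) * (s.factorial : ℂ)) *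
          (((s : ℂ) - j) / ((s : ℂ) * j.factorial))) •
        (Complex.exp z * (1 - z / (r : ℂ)) / z ^ (r + s - j + 1))) =
      (2 * (Real.pi : ℂ) * Complex.I * ((r.factorial : ℂ) * (s.factorial : ℂ)) *
          (((s : ℂ) - j) / ((s : ℂ) * j.factorial))) *
        (2 * Real.pi * Complex.I * ((r : ℂ) - ((r + s - j : ℕ) : ℂ)) /
          ((r : ℂ) * ((r + s - j).factorial : ℂ))) := by
    intro j _
    rw [circleIntegral.integral_smul, expInt' hR hr (r + s - j), smul_eq_mul]
  rw [covD, circleIntegral.integral_congr hR.le hpoint, circleIntegral_sum _ _ hci2,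
    sum_congr rfl hterm, Finset.mul_sum, Complex.ofReal_sum]
  refine sum_congr rfl fun j hj => ?_
  have hj' := mem_range.mp hj
  have hcast : ((r + s - j : ℕ) : ℂ) = (r : ℂ) + (s : ℂ) - (j : ℂ) := by
    rw [Nat.cast_sub (by omega), Nat.cast_add]
  have hπ : ((Real.pi : ℂ)) ≠ 0 := Complex.ofReal_ne_zero.mpr Real.pi_ne_zero
  have hrc : (r : ℂ) ≠ 0 := Nat.cast_ne_zero.mpr (by omega)
  have hsc : (s : ℂ) ≠ 0 := Nat.cast_ne_zero.mpr (by omega)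
  have hjf : ((j.factorial : ℂ)) ≠ 0 := Nat.cast_ne_zero.mpr j.factorial_ne_zero
  have hnf : (((r + s - j).factorial : ℂ)) ≠ 0 :=
    Nat.cast_ne_zero.mpr (r + s - j).factorial_ne_zero
  rw [hcast]
  push_cast
  field_simp
  linear_combination (-4 * (r.factorial : ℂ) * (s.factorial : ℂ) *
    ((s : ℂ) - j) ^ 2) * Complex.I_sq

end Main

/-- For all integers `r ≥ s ≥ 1`, the complex number `D(r,s)` is a strictly positive
real number: its imaginary part vanishes and its real part is positive. -/
theorem covD_pos_real (r s : ℕ) (hs : 1 ≤ s) (hsr : s ≤ r)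
    (ρ R : ℝ) (hρ : 0 < ρ) (hρR : ρ < R) :
    (covD r s R ρ).im = 0 ∧ 0 < (covD r s R ρ).re := by
  rw [covD_eq r s hs hsr ρ R hρ hρR]
  refine ⟨Complex.ofReal_im _, ?_⟩
  rw [Complex.ofReal_re]
  refine Finset.sum_pos (fun j hj => ?_) (nonempty_range_iff.mpr (by omega))
  have hj' := mem_range.mp hj
  have h1 : (0 : ℝ) < (s : ℝ) - j := by
    have : (j : ℝ) < s := by exact_mod_cast hj'
    linarith
  have h2 : (0 : ℝ) < (r.factorial * s.factorial : ℝ) := by positivity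
  refine div_pos (by positivity) ?_
  have hr1 : (0 : ℝ) < r := by exact_mod_cast (by omega : 0 < r)
  have hs1 : (0 : ℝ) < s := by exact_mod_cast (by omega : 0 < s)
  have hjf : (0 : ℝ) < j.factorial := by exact_mod_cast j.factorial_pos
  have hnf : (0 : ℝ) < (r + s - j).factorial := by exact_mod_cast (r + s - j).factorial_pos
  positivity
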